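/- The identity map (Ψ, d_M) → (Ψ, Euclidean metric) is a homeomorphism: the Mazurkiewicz metric d_M induces the same topology on Ψ as the Euclidean metric. -/

import Mathlib

noncomputable section
open Set Metric Filter Topology

abbrev E2 := EuclideanSpace ℝ (Fin 2)
abbrev E3 := EuclideanSpace ℝ (Fin 3)

/-- The point (a,b) in the Euclidean plane. -/
def pt (a b : ℝ) : E2 := (WithLp.equiv 2 (Fin 2 → ℝ)).symm ![a, b]
def pt3 (a b c : ℝ) : E3 := (WithLp.equiv 2 (Fin 3 → ℝ)).symm ![a, b, c]

/-- The topologist's comb. -/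
def Psi : Set E2 :=
  {x : E2 | x 0 ∈ Ioo (-1 : ℝ) 1 ∧ x 1 ∈ Ioo (0 : ℝ) 2} \
    ⋃ j : ℕ, {x : E2 | x 0 ∈ Icc (0 : ℝ) 1 ∧ x 1 = 2 ^ (-(j : ℤ))}

def theta (j : ℕ) : ℝ := 2 ^ (-(j : ℤ))
/-- For t ∈ (2^{-j}, 2^{1-j}), jIdx t = j. -/
def jIdx (t : ℝ) : ℕ := ⌈-Real.logb 2 t⌉₊

/-- The folding map into ℝ³ used to define the extended metric. -/
def F (x : E2) : E3 :=
  if x 0 ≤ 0 then pt3 (x 0) (x 1) 0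
  else pt3 (x 0 * Real.cos (theta (jIdx (x 1)))) (x 1) (x 0 * Real.sin (theta (jIdx (x 1))))

def distExt (x y : E2) : ℝ := dist (F x) (F y)

/-- The Mazurkiewicz distance on the comb. -/
def dM (x y : E2) : ℝ :=
  sInf {d : ℝ | ∃ E : Set E2, E ⊆ Psi ∧ IsConnected E ∧ x ∈ E ∧ y ∈ E ∧ d = Metric.diam E}

/-! ### Auxiliary lemmas -/

lemma mem_Psi_iff (x : E2) : x ∈ Psi ↔
    ((-1 : ℝ) < x 0 ∧ x 0 < 1) ∧ (0 < x 1 ∧ x 1 < 2) ∧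
      ∀ j : ℕ, ¬((0 : ℝ) ≤ x 0 ∧ x 0 ≤ 1 ∧ x 1 = 2 ^ (-(j : ℤ))) := by
  simp only [Psi, mem_diff, mem_setOf_eq, mem_Ioo, mem_iUnion, mem_Icc, not_exists]
  constructor
  · rintro ⟨⟨h1, h2⟩, h3⟩
    exact ⟨h1, h2, fun j hj => h3 j ⟨⟨hj.1, hj.2.1⟩, hj.2.2⟩⟩
  · rintro ⟨h1, h2, h3⟩
    exact ⟨⟨h1, h2⟩, fun j hj => h3 j ⟨hj.1.1, hj.1.2, hj.2⟩⟩

lemma coord_dist_le (x y : E2) (i : Fin 2) : |x i - y i| ≤ dist x y := by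
  rw [EuclideanSpace.dist_eq, ← Real.sqrt_sq_eq_abs]
  apply Real.sqrt_le_sqrt
  have h : (x i - y i) ^ 2 = dist (x i) (y i) ^ 2 := by rw [Real.dist_eq, sq_abs]
  rw [h]
  exact Finset.single_le_sum (f := fun i => dist (x i) (y i) ^ 2)
    (fun i _ => sq_nonneg _) (Finset.mem_univ i)

lemma psi_bounded : Bornology.IsBounded Psi := by
  apply (Metric.isBounded_closedBall (x := (0 : E2)) (r := 3)).subset
  intro x hx
  rw [mem_Psi_iff] at hx
  obtain ⟨⟨h1, h2⟩, ⟨h3, h4⟩, -⟩ := hx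
  rw [mem_closedBall, dist_zero_right, EuclideanSpace.norm_eq, Fin.sum_univ_two]
  have key : Real.sqrt (‖x 0‖ ^ 2 + ‖x 1‖ ^ 2) ≤ Real.sqrt 9 := by
    apply Real.sqrt_le_sqrt
    rw [Real.norm_eq_abs, Real.norm_eq_abs]
    have h0 : |x 0| ≤ 1 := abs_le.2 ⟨h1.le, h2.le⟩
    have h5 : |x 1| ≤ 2 := abs_le.2 ⟨by linarith, h4.le⟩
    nlinarith [abs_nonneg (x 0), abs_nonneg (x 1)]
  calc Real.sqrt (‖x 0‖ ^ 2 + ‖x 1‖ ^ 2) ≤ Real.sqrt 9 := key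
    _ = 3 := by rw [show (9 : ℝ) = 3 ^ 2 by norm_num, Real.sqrt_sq]; norm_num

/-- The horizontal segment from `x` to `(-1/2, x 1)` stays in `Psi`. -/
lemma horiz_sub (x : E2) (hx : x ∈ Psi) : segment ℝ x (pt (-(1/2)) (x 1)) ⊆ Psi := by
  rw [mem_Psi_iff] at hx
  obtain ⟨⟨h1, h2⟩, ⟨h3, h4⟩, h5⟩ := hx
  rintro z ⟨a, b, ha, hb, hab, rfl⟩
  have hz0 : (a • x + b • pt (-(1/2)) (x 1)) 0 = a * x 0 + b * (-(1/2)) := by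
    simp [PiLp.add_apply, PiLp.smul_apply, pt, smul_eq_mul]
  have hz1 : (a • x + b • pt (-(1/2)) (x 1)) 1 = x 1 := by
    simp only [PiLp.add_apply, PiLp.smul_apply, pt, smul_eq_mul]
    show a * x 1 + b * (![-(1/2), x 1] 1) = x 1
    simp only [Matrix.cons_val_one, Matrix.head_cons, Matrix.cons_val_zero]
    linear_combination (x 1) * hab
  rw [mem_Psi_iff, hz0, hz1]
  refine ⟨⟨by nlinarith, by nlinarith⟩, ⟨h3, h4⟩, ?_⟩
  rintro j ⟨hj0, hj1, hj2⟩
  rcases le_or_gt 0 (x 0) with hc | hc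
  · exact h5 j ⟨hc, h2.le, hj2⟩
  · have k1 : a * x 0 ≤ 0 := mul_nonpos_iff.mpr (Or.inl ⟨ha, hc.le⟩)
    have k2 : b ≤ 0 := by linarith
    have k3 : b = 0 := le_antisymm k2 hb
    have k4 : a = 1 := by linarith
    rw [k4, one_mul] at k1
    rw [k3, k4] at hj0
    rw [one_mul] at hj0
    linarith

/-- The vertical segment on the line x = -1/2 stays in `Psi`. -/
lemma vert_sub (t : ℝ) (ht : 0 < t) (ht2 : t < 2) :
    segment ℝ (pt (-(1/2)) t) (pt (-(1/2)) 1) ⊆ Psi := by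
  rintro z ⟨a, b, ha, hb, hab, rfl⟩
  have hz0 : (a • pt (-(1/2)) t + b • pt (-(1/2)) 1) 0 = -(1/2) := by
    simp only [PiLp.add_apply, PiLp.smul_apply, pt, smul_eq_mul]
    show a * (![-(1/2), t] 0) + b * (![-(1/2), (1:ℝ)] 0) = -(1/2)
    simp only [Matrix.cons_val_zero]
    linear_combination (-(1/2) : ℝ) * hab
  have hz1 : (a • pt (-(1/2)) t + b • pt (-(1/2)) 1) 1 = a * t + b := by
    simp only [PiLp.add_apply, PiLp.smul_apply, pt, smul_eq_mul]
    show a * (![-(1/2), t] 1) + b * (![-(1/2), (1:ℝ)] 1) = a * t + b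
    simp
  rw [mem_Psi_iff, hz0, hz1]
  refine ⟨⟨by norm_num, by norm_num⟩, ⟨?_, ?_⟩, ?_⟩
  · nlinarith
  · nlinarith
  · rintro j ⟨hj0, -, -⟩; linarith

/-- Connecting set from a point of Psi to the reference point (-1/2, 1). -/
def connSet (x : E2) : Set E2 :=
  segment ℝ x (pt (-(1/2)) (x 1)) ∪ segment ℝ (pt (-(1/2)) (x 1)) (pt (-(1/2)) 1)

lemma connSet_sub (x : E2) (hx : x ∈ Psi) : connSet x ⊆ Psi := by
  have hx' := (mem_Psi_iff x).1 hx
  exact union_subset (horiz_sub x hx) (vert_sub (x 1) hx'.2.1.1 hx'.2.1.2)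

lemma connSet_isConnected (x : E2) : IsConnected (connSet x) := by
  apply IsConnected.union
  · exact ⟨pt (-(1/2)) (x 1), right_mem_segment ℝ _ _, left_mem_segment ℝ _ _⟩
  · exact ⟨⟨x, left_mem_segment ℝ _ _⟩, (convex_segment _ _).isPreconnected⟩
  · exact ⟨⟨_, left_mem_segment ℝ _ _⟩, (convex_segment _ _).isPreconnected⟩

lemma top_mem_connSet (x : E2) : pt (-(1/2)) 1 ∈ connSet x :=
  Or.inr (right_mem_segment ℝ _ _)

lemma self_mem_connSet (x : E2) : x ∈ connSet x := Or.inl (left_mem_segment ℝ _ _)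

lemma dM_set_nonempty (x y : E2) (hx : x ∈ Psi) (hy : y ∈ Psi) :
    {d : ℝ | ∃ E : Set E2, E ⊆ Psi ∧ IsConnected E ∧ x ∈ E ∧ y ∈ E ∧ d = Metric.diam E}.Nonempty :=
  ⟨_, connSet x ∪ connSet y, union_subset (connSet_sub x hx) (connSet_sub y hy),
    IsConnected.union ⟨pt (-(1/2)) 1, top_mem_connSet x, top_mem_connSet y⟩
      (connSet_isConnected x) (connSet_isConnected y),
    Or.inl (self_mem_connSet x), Or.inr (self_mem_connSet y), rfl⟩

lemma dist_le_dM (x y : E2) (hx : x ∈ Psi) (hy : y ∈ Psi) : dist x y ≤ dM x y := by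
  apply le_csInf (dM_set_nonempty x y hx hy)
  rintro d ⟨E, hE, -, hxE, hyE, rfl⟩
  exact dist_le_diam_of_mem (psi_bounded.subset hE) hxE hyE

/-- positive distance from a non-tooth height to the set of tooth heights -/
lemma tooth_dist (t : ℝ) (ht : 0 < t) (h : ∀ j : ℕ, t ≠ 2 ^ (-(j : ℤ))) :
    ∃ r > 0, ∀ j : ℕ, r ≤ |t - 2 ^ (-(j : ℤ))| := by
  obtain ⟨N, hN⟩ : ∃ n : ℕ, (2 : ℝ) ^ (-(n : ℤ)) < t := by
    obtain ⟨n, hn⟩ := exists_pow_lt_of_lt_one ht (by norm_num : (1 : ℝ) / 2 < 1)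
    exact ⟨n, by rw [zpow_neg, zpow_natCast]; rw [one_div, inv_pow] at hn; exact hn⟩
  set S : Finset ℝ := (Finset.range (N + 1)).image (fun j : ℕ => |t - 2 ^ (-(j : ℤ))|) with hS
  have hSne : S.Nonempty := ⟨_, Finset.mem_image_of_mem _ (Finset.mem_range.2 (Nat.succ_pos N))⟩
  refine ⟨min (t - 2 ^ (-(N : ℤ))) (S.min' hSne), lt_min (by linarith) ?_, ?_⟩
  · obtain ⟨v, hv, hveq⟩ := Finset.mem_image.1 (S.min'_mem hSne)
    rw [← hveq]
    exact abs_pos.2 (sub_ne_zero.2 (h v))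
  · intro j
    rcases le_or_gt j N with hj | hj
    · exact le_trans (min_le_right _ _) (Finset.min'_le S _
        (Finset.mem_image_of_mem _ (Finset.mem_range.2 (Nat.lt_succ_of_le hj))))
    · have hle : (2 : ℝ) ^ (-(j : ℤ)) ≤ 2 ^ (-(N : ℤ)) :=
        zpow_le_zpow_right₀ one_le_two (by omega)
      have h2 : t - 2 ^ (-(j : ℤ)) ≤ |t - 2 ^ (-(j : ℤ))| := le_abs_self _
      exact le_trans (min_le_left _ _) (by linarith)

/-- an open ball around any point of Psi stays in Psi -/
lemma exists_ball_sub (x : E2) (hx : x ∈ Psi) : ∃ r > 0, ball x r ⊆ Psi := by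
  rw [mem_Psi_iff] at hx
  obtain ⟨⟨h1, h2⟩, ⟨h3, h4⟩, h5⟩ := hx
  rcases lt_or_ge (x 0) 0 with hc | hc
  · refine ⟨min (min (x 1) (2 - x 1)) (min (-(x 0)) (x 0 + 1)),
      lt_min (lt_min h3 (by linarith)) (lt_min (by linarith) (by linarith)), ?_⟩
    intro z hz
    rw [mem_ball] at hz
    have e0 := abs_lt.1 (lt_of_le_of_lt (coord_dist_le z x 0) hz)
    have e1 := abs_lt.1 (lt_of_le_of_lt (coord_dist_le z x 1) hz)
    have r1 : min (min (x 1) (2 - x 1)) (min (-(x 0)) (x 0 + 1)) ≤ x 1 :=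
      le_trans (min_le_left _ _) (min_le_left _ _)
    have r2 : min (min (x 1) (2 - x 1)) (min (-(x 0)) (x 0 + 1)) ≤ 2 - x 1 :=
      le_trans (min_le_left _ _) (min_le_right _ _)
    have r3 : min (min (x 1) (2 - x 1)) (min (-(x 0)) (x 0 + 1)) ≤ -(x 0) :=
      le_trans (min_le_right _ _) (min_le_left _ _)
    have r4 : min (min (x 1) (2 - x 1)) (min (-(x 0)) (x 0 + 1)) ≤ x 0 + 1 :=
      le_trans (min_le_right _ _) (min_le_right _ _)
    rw [mem_Psi_iff]
    refine ⟨⟨by linarith, by linarith⟩, ⟨by linarith, by linarith⟩, ?_⟩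
    rintro j ⟨hj0, -, -⟩
    linarith
  · have hne : ∀ j : ℕ, x 1 ≠ 2 ^ (-(j : ℤ)) := fun j hne => h5 j ⟨hc, h2.le, hne⟩
    obtain ⟨rT, hrT, hT⟩ := tooth_dist (x 1) h3 hne
    refine ⟨min (min (min (x 1) (2 - x 1)) (min (1 - x 0) (x 0 + 1))) rT,
      lt_min (lt_min (lt_min h3 (by linarith)) (lt_min (by linarith) (by linarith))) hrT, ?_⟩
    intro z hz
    rw [mem_ball] at hz
    have e0 := abs_lt.1 (lt_of_le_of_lt (coord_dist_le z x 0) hz)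
    have e1' := lt_of_le_of_lt (coord_dist_le z x 1) hz
    have e1 := abs_lt.1 e1'
    have r1 : min (min (min (x 1) (2 - x 1)) (min (1 - x 0) (x 0 + 1))) rT ≤ x 1 :=
      le_trans (min_le_left _ _) (le_trans (min_le_left _ _) (min_le_left _ _))
    have r2 : min (min (min (x 1) (2 - x 1)) (min (1 - x 0) (x 0 + 1))) rT ≤ 2 - x 1 :=
      le_trans (min_le_left _ _) (le_trans (min_le_left _ _) (min_le_right _ _))
    have r3 : min (min (min (x 1) (2 - x 1)) (min (1 - x 0) (x 0 + 1))) rT ≤ 1 - x 0 :=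
      le_trans (min_le_left _ _) (le_trans (min_le_right _ _) (min_le_left _ _))
    have r4 : min (min (min (x 1) (2 - x 1)) (min (1 - x 0) (x 0 + 1))) rT ≤ x 0 + 1 :=
      le_trans (min_le_left _ _) (le_trans (min_le_right _ _) (min_le_right _ _))
    have r5 : min (min (min (x 1) (2 - x 1)) (min (1 - x 0) (x 0 + 1))) rT ≤ rT :=
      min_le_right _ _
    rw [mem_Psi_iff]
    refine ⟨⟨by linarith, by linarith⟩, ⟨by linarith, by linarith⟩, ?_⟩
    rintro j ⟨-, -, hj2⟩
    have := hT j
    rw [← hj2] at this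
    have habs : |x 1 - z 1| < rT := lt_of_lt_of_le (by rw [abs_sub_comm]; exact e1') r5
    linarith [this, habs]

theorem dM_same_topology (x : E2) (hx : x ∈ Psi) :
    ∀ ε > (0:ℝ), ∃ δ > (0:ℝ),
      (∀ y ∈ Psi, dist x y < δ → dM x y < ε) ∧
      (∀ y ∈ Psi, dM x y < δ → dist x y < ε) := by
  intro ε hε
  obtain ⟨r, hr, hball⟩ := exists_ball_sub x hx
  set δ' := min r (ε / 3) with hδ'def
  have hδ' : 0 < δ' := lt_min hr (by linarith)
  refine ⟨min δ' ε, lt_min hδ' hε, ?_, ?_⟩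
  · intro y hy hdist
    have hsub : ball x δ' ⊆ Psi :=
      Subset.trans (ball_subset_ball (min_le_left _ _)) hball
    have hmem : dM x y ≤ diam (ball x δ') := by
      apply csInf_le
      · refine ⟨0, fun d hd => ?_⟩
        obtain ⟨E, -, -, -, -, rfl⟩ := hd
        exact diam_nonneg
      · exact ⟨ball x δ', hsub,
          ⟨⟨x, mem_ball_self hδ'⟩, (convex_ball x δ').isPreconnected⟩,
          mem_ball_self hδ',
          mem_ball.2 (by rw [dist_comm]; exact lt_of_lt_of_le hdist (min_le_left _ _)), rfl⟩
    have hd2 : diam (ball x δ') ≤ 2 * δ' := diam_ball hδ'.le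
    have hd3 : δ' ≤ ε / 3 := min_le_right _ _
    linarith
  · intro y hy hdM
    have h1 := dist_le_dM x y hx hy
    have h2 := lt_of_lt_of_le hdM (min_le_right _ _)
    linarith
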